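/- If f has a factor of total degree 1 in k[Y,Z], then b22² − 4·b40·b04 = 0, b20² − 4·b40·b00 = 0, and b22·b20 + 2·b40·b02 = 0. -/
import Mathlib

open MvPolynomial

private lemma deg_one_decomp {k : Type*} [CommRing k] (L : MvPolynomial (Fin 2) k)
    (h : L.totalDegree = 1) :
    L = C (L.coeff (Finsupp.single 0 1)) * X 0 + C (L.coeff (Finsupp.single 1 1)) * X 1
        + C (L.coeff 0) := by
  ext m
  rw [coeff_add, coeff_add, coeff_C_mul, coeff_C_mul, coeff_X', coeff_X', coeff_C]
  by_cases h0 : Finsupp.single (0 : Fin 2) 1 = m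
  · subst h0
    simp [Finsupp.single_eq_single_iff, Finsupp.single_eq_zero, eq_comm]
  by_cases h1 : Finsupp.single (1 : Fin 2) 1 = m
  · subst h1
    simp [Finsupp.single_eq_single_iff, Finsupp.single_eq_zero, eq_comm]
  by_cases hz : (0 : Fin 2 →₀ ℕ) = m
  · subst hz
    simp [eq_comm, Finsupp.single_eq_zero]
  · have hc0 : L.coeff m = 0 := by
      by_contra hc
      have hm := MvPolynomial.le_totalDegree (p := L) (MvPolynomial.mem_support_iff.mpr hc)
      rw [h] at hm
      have hsum : (m.sum fun _ (e : ℕ) => e) = m 0 + m 1 := by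
        rw [Finsupp.sum_fintype _ _ (fun _ => rfl), Fin.sum_univ_two]
      rw [hsum] at hm
      have h00 : m 0 = 0 ∨ m 0 = 1 := by omega
      have h11 : m 1 = 0 ∨ m 1 = 1 := by omega
      rcases h00 with ha | ha <;> rcases h11 with hb | hb
      · refine hz ?_; ext i; fin_cases i <;> simp [ha, hb]
      · refine h1 ?_; ext i; fin_cases i <;> simp [ha, hb, Finsupp.single_apply]
      · refine h0 ?_; ext i; fin_cases i <;> simp [ha, hb, Finsupp.single_apply]
      · omega
    simp [hc0, h0, h1, hz]

/-- Lemma A.1 of the paper: if the quartic `f` (with `b40, b04, b00 ≠ 0`) has a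
factor of total degree 1 in `k[Y,Z]`, then the stated coefficient relations hold. -/
theorem linear_factor_relations
    {k : Type*} [Field k] (hchar : ringChar k ≠ 2)
    (b40 b22 b04 b20 b02 b00 : k)
    (hb40 : b40 ≠ 0) (hb04 : b04 ≠ 0) (hb00 : b00 ≠ 0)
    (hfac : ∃ L g : MvPolynomial (Fin 2) k,
      (C b40 * X 0 ^ 4 + C b22 * X 0 ^ 2 * X 1 ^ 2 + C b20 * X 0 ^ 2
        + C b04 * X 1 ^ 4 + C b02 * X 1 ^ 2 + C b00 : MvPolynomial (Fin 2) k)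
        = L * g ∧ L.totalDegree = 1) :
    b22 ^ 2 - 4 * b40 * b04 = 0
    ∧ b20 ^ 2 - 4 * b40 * b00 = 0
    ∧ b22 * b20 + 2 * b40 * b02 = 0 := by
  obtain ⟨L, g, hf, hdeg⟩ := hfac
  have h2 : (2 : k) ≠ 0 := Ring.two_ne_zero hchar
  set a1 := L.coeff (Finsupp.single 0 1) with ha1def
  set a2 := L.coeff (Finsupp.single 1 1) with ha2def
  set a0 := L.coeff 0 with ha0def
  have hL : L = C a1 * X 0 + C a2 * X 1 + C a0 := deg_one_decomp L hdeg
  -- First: a1 ≠ 0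
  have ha1 : a1 ≠ 0 := by
    intro h1
    by_cases h2' : a2 = 0
    · rw [hL, h1, h2'] at hdeg
      simp [totalDegree_C] at hdeg
    · obtain ⟨c, hcdef⟩ : ∃ c : k, c = -a0 / a2 := ⟨_, rfl⟩
      set φ := (aeval ![(Polynomial.X : Polynomial k), Polynomial.C c] :
          MvPolynomial (Fin 2) k →ₐ[k] Polynomial k) with hφdef
      have hL0 : φ L = 0 := by
        rw [hL, h1]
        simp only [hφdef, map_add, map_mul, aeval_X, aeval_C, Matrix.cons_val_zero,
          Matrix.cons_val_one, Matrix.head_cons, Polynomial.algebraMap_eq, map_zero, zero_mul,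
          zero_add]
        rw [← Polynomial.C_mul, ← Polynomial.C_add]
        have : a2 * c + a0 = 0 := by rw [hcdef]; field_simp; ring
        rw [this, Polynomial.C_0]
      have hφf : φ (C b40 * X 0 ^ 4 + C b22 * X 0 ^ 2 * X 1 ^ 2 + C b20 * X 0 ^ 2
          + C b04 * X 1 ^ 4 + C b02 * X 1 ^ 2 + C b00) = 0 := by
        rw [hf, map_mul, hL0, zero_mul]
      have hexp : Polynomial.C (b04 * c ^ 4 + b02 * c ^ 2 + b00)
          + Polynomial.C (b22 * c ^ 2 + b20) * Polynomial.X ^ 2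
          + Polynomial.C b40 * Polynomial.X ^ 4 = 0 := by
        rw [← hφf]
        simp only [hφdef, map_add, map_mul, map_pow, aeval_X, aeval_C, Matrix.cons_val_zero,
          Matrix.cons_val_one, Matrix.head_cons, Polynomial.C_add, Polynomial.C_mul,
          Polynomial.C_pow, Polynomial.algebraMap_eq]
        ring
      have hk4 : (Polynomial.C (b04 * c ^ 4 + b02 * c ^ 2 + b00)
          + Polynomial.C (b22 * c ^ 2 + b20) * Polynomial.X ^ 2
          + Polynomial.C b40 * Polynomial.X ^ 4).coeff 4 = 0 := by
        rw [hexp, Polynomial.coeff_zero]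
      simp only [Polynomial.coeff_add, Polynomial.coeff_C_mul, Polynomial.coeff_X_pow,
        Polynomial.coeff_C] at hk4
      norm_num at hk4
      exact hb40 hk4
  -- Main case: substitute Y := t + s * Z
  obtain ⟨s, hsdef⟩ : ∃ s : k, s = -a2 / a1 := ⟨_, rfl⟩
  obtain ⟨t, htdef⟩ : ∃ t : k, t = -a0 / a1 := ⟨_, rfl⟩
  set φ := (aeval ![Polynomial.C t + Polynomial.C s * Polynomial.X,
      (Polynomial.X : Polynomial k)] : MvPolynomial (Fin 2) k →ₐ[k] Polynomial k) with hφdef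
  have hL0 : φ L = 0 := by
    rw [hL]
    simp only [hφdef, map_add, map_mul, aeval_X, aeval_C, Matrix.cons_val_zero,
      Matrix.cons_val_one, Matrix.head_cons, Polynomial.algebraMap_eq]
    have ht' : a1 * t + a0 = 0 := by rw [htdef]; field_simp; ring
    have hs' : a1 * s + a2 = 0 := by rw [hsdef]; field_simp; ring
    have expand : Polynomial.C a1 * (Polynomial.C t + Polynomial.C s * Polynomial.X)
        + Polynomial.C a2 * Polynomial.X + Polynomial.C a0
        = Polynomial.C (a1 * t + a0) + Polynomial.C (a1 * s + a2) * Polynomial.X := by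
      rw [Polynomial.C_add, Polynomial.C_add, Polynomial.C_mul, Polynomial.C_mul]
      ring
    rw [expand, ht', hs']
    simp
  have hφf : φ (C b40 * X 0 ^ 4 + C b22 * X 0 ^ 2 * X 1 ^ 2 + C b20 * X 0 ^ 2
      + C b04 * X 1 ^ 4 + C b02 * X 1 ^ 2 + C b00) = 0 := by
    rw [hf, map_mul, hL0, zero_mul]
  have hexp : Polynomial.C (b40*t^4 + b20*t^2 + b00)
      + Polynomial.C (4*b40*s*t^3 + 2*b20*s*t) * Polynomial.X
      + Polynomial.C (6*b40*s^2*t^2 + b22*t^2 + b20*s^2 + b02) * Polynomial.X^2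
      + Polynomial.C (4*b40*s^3*t + 2*b22*s*t) * Polynomial.X^3
      + Polynomial.C (b40*s^4 + b22*s^2 + b04) * Polynomial.X^4 = 0 := by
    rw [← hφf]
    simp only [hφdef, map_add, map_mul, map_pow, aeval_X, aeval_C, Matrix.cons_val_zero,
      Matrix.cons_val_one, Matrix.head_cons, Polynomial.C_add, Polynomial.C_mul,
      Polynomial.C_pow, map_ofNat, Polynomial.algebraMap_eq]
    ring
  have key : ∀ n : ℕ, (Polynomial.C (b40*t^4 + b20*t^2 + b00)
      + Polynomial.C (4*b40*s*t^3 + 2*b20*s*t) * Polynomial.X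
      + Polynomial.C (6*b40*s^2*t^2 + b22*t^2 + b20*s^2 + b02) * Polynomial.X^2
      + Polynomial.C (4*b40*s^3*t + 2*b22*s*t) * Polynomial.X^3
      + Polynomial.C (b40*s^4 + b22*s^2 + b04) * Polynomial.X^4).coeff n = 0 := by
    intro n; rw [hexp, Polynomial.coeff_zero]
  have k4 := key 4
  have k3 := key 3
  have k2 := key 2
  have k1 := key 1
  have k0 := key 0
  simp only [Polynomial.coeff_add, Polynomial.coeff_C_mul, Polynomial.coeff_X_pow,
    Polynomial.coeff_X, Polynomial.coeff_C] at k4 k3 k2 k1 k0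
  norm_num at k4 k3 k2 k1 k0
  -- s ≠ 0 and t ≠ 0
  have hs : s ≠ 0 := by
    intro h
    rw [h] at k4
    norm_num at k4
    exact hb04 k4
  have ht : t ≠ 0 := by
    intro h
    rw [h] at k0
    norm_num at k0
    exact hb00 k0
  have hst : (2 * s * t : k) ≠ 0 := mul_ne_zero (mul_ne_zero h2 hs) ht
  have h22 : b22 = -(2 * b40 * s ^ 2) := by
    have h' : (2 * s * t) * (b22 + 2 * b40 * s ^ 2) = 0 := by linear_combination k3
    have := (mul_eq_zero.mp h').resolve_left hst
    linear_combination this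
  have h20 : b20 = -(2 * b40 * t ^ 2) := by
    have h' : (2 * s * t) * (b20 + 2 * b40 * t ^ 2) = 0 := by linear_combination k1
    have := (mul_eq_zero.mp h').resolve_left hst
    linear_combination this
  refine ⟨?_, ?_, ?_⟩
  · linear_combination (b22 + 2 * b40 * s ^ 2) * h22 - 4 * b40 * k4
  · linear_combination (b20 + 2 * b40 * t ^ 2) * h20 - 4 * b40 * k0
  · linear_combination (b20 - 2 * b40 * t ^ 2) * h22 - 4 * b40 * s ^ 2 * h20 + 2 * b40 * k2
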